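/- Let K be an algebraically closed field and let V be a 3-graded vector space over K such that the homogeneous components V_{(2,1,1)}, V_{(1,2,1)}, V_{(1,1,2)}, V_{(2,2,1)}, V_{(2,1,2)} and V_{(1,2,2)} are all nonzero. Then the quotient of the set of 3-graded nilpotent tuples on V by base-change equivalence is an infinite set. -/

import Mathlib

open Module

section Defs

variable {K : Type*} [Field K] {k : ℕ} {V : Type*} [AddCommGroup V] [Module K V]

/-- The `i`-th standard basis vector of `ℤ^k`. -/
def stdE (k : ℕ) (i : Fin k) : Fin k → ℤ := fun j => if j = i then 1 else 0

/-- A `k`-graded nilpotent tuple on a `k`-graded vector space: a tuple of pairwise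
commuting nilpotent endomorphisms, the `i`-th of which lowers the `i`-th degree by one. -/
def IsGradedNilTuple (grading : (Fin k → ℤ) → Submodule K V)
    (φ : Fin k → Module.End K V) : Prop :=
  (∀ i j, Commute (φ i) (φ j)) ∧ (∀ i, IsNilpotent (φ i)) ∧
    ∀ i x, (grading x).map (φ i) ≤ grading (x - stdE k i)

/-- The type of `k`-graded nilpotent tuples for a given grading. -/
def GradedNilTuple (grading : (Fin k → ℤ) → Submodule K V) :=
  { φ : Fin k → Module.End K V // IsGradedNilTuple grading φ }

/-- Base-change equivalence of graded nilpotent tuples: conjugation by a linear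
automorphism preserving every homogeneous component. -/
def BaseChangeRel (grading : (Fin k → ℤ) → Submodule K V)
    (φ ψ : GradedNilTuple grading) : Prop :=
  ∃ g : V ≃ₗ[K] V, (∀ x, (grading x).map (g : V →ₗ[K] V) = grading x) ∧
    ∀ i, ψ.1 i = (g : V →ₗ[K] V) ∘ₗ φ.1 i ∘ₗ (g.symm : V →ₗ[K] V)

/-- The shape of a graded vector space: all `s ∈ (ℤ≥1)^k` dominated by the index of
some nonzero homogeneous component. -/
def shapeOf (grading : (Fin k → ℤ) → Submodule K V) : Set (Fin k → ℤ) :=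
  {s | (∀ i, 1 ≤ s i) ∧ ∃ p : Fin k → ℤ, (∀ i, s i ≤ p i) ∧ grading p ≠ ⊥}

end Defs

/-- A `k`-graded finite-dimensional vector space over `K`: an internal direct sum
decomposition indexed by `ℤ^k`, supported on indices with all coordinates `≥ 1`. -/
structure GradedVS (K : Type*) [Field K] (k : ℕ) where
  V : Type
  [instAdd : AddCommGroup V]
  [instMod : Module K V]
  [instFin : FiniteDimensional K V]
  grading : (Fin k → ℤ) → Submodule K V
  internal : DirectSum.IsInternal grading
  supp : ∀ x : Fin k → ℤ, (∃ i, x i < 1) → grading x = ⊥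

attribute [instance] GradedVS.instAdd GradedVS.instMod GradedVS.instFin

/-- Componentwise comparison of partitions (parts beyond the length count as `0`). -/
def partLE (L L' : List ℕ) : Prop := ∀ i : ℕ, L.getD i 0 ≤ L'.getD i 0

/-- The flat 3-dimensional Young diagram encoded by a pair of partitions with equal
first parts: `{(i,1,j) : 1 ≤ j ≤ λ_i} ∪ {(1,i,j) : 1 ≤ j ≤ μ_i}`. -/
def FlatDiagram (L M : List ℕ) : Set (Fin 3 → ℤ) :=
  {s | (s 1 = 1 ∧ 1 ≤ s 0 ∧ 1 ≤ s 2 ∧ s 0 ≤ (L.length : ℤ) ∧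
          s 2 ≤ (L.getD ((s 0).toNat - 1) 0 : ℤ)) ∨
       (s 0 = 1 ∧ 1 ≤ s 1 ∧ 1 ≤ s 2 ∧ s 1 ≤ (M.length : ℤ) ∧
          s 2 ≤ (M.getD ((s 1).toNat - 1) 0 : ℤ))}

/-- A `k`-dimensional Young diagram: a finite, downward-closed subset of `(ℤ≥1)^k`. -/
def IsYoungDiagram {k : ℕ} (Λ : Set (Fin k → ℤ)) : Prop :=
  Λ.Finite ∧ (∀ x ∈ Λ, ∀ i, 1 ≤ x i) ∧
    ∀ x ∈ Λ, ∀ y : Fin k → ℤ, (∀ i, 1 ≤ y i) → (∀ i, y i ≤ x i) → y ∈ Λ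

/-- A 3-dimensional Young diagram is flat if, after permuting coordinates, every point
has a `1` in one of two fixed coordinate directions. -/
def IsFlat (Λ : Set (Fin 3 → ℤ)) : Prop :=
  ∃ i j : Fin 3, i ≠ j ∧ ∀ x ∈ Λ, x i = 1 ∨ x j = 1

/-- The Young diagram `Y(λ) ⊆ (ℤ≥1)²` of a partition given as a list. -/
def YoungSet (L : List ℕ) : Set (Fin 2 → ℤ) :=
  {s | 1 ≤ s 0 ∧ 1 ≤ s 1 ∧ s 0 ≤ (L.length : ℤ) ∧
       s 1 ≤ (L.getD ((s 0).toNat - 1) 0 : ℤ)}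


/-! ### Auxiliary machinery for STATEMENT 3 -/

section Stmt3Aux

variable {K : Type*} [Field K] {V : Type*} [AddCommGroup V] [Module K V]

/-- For a nonzero vector `a` in a component of an internal direct sum, there is a linear
functional equal to `1` at `a` and vanishing on every other component. -/
lemma exists_graded_dual {ι : Type*} [DecidableEq ι] (A : ι → Submodule K V)
    (hA : DirectSum.IsInternal A) (x : ι) (a : V)
    (ha : a ∈ A x) (ha0 : a ≠ 0) :
    ∃ f : V →ₗ[K] K, f a = 1 ∧ ∀ y, y ≠ x → ∀ m ∈ A y, f m = 0 := by
  set N : Submodule K V := ⨆ (y) (_ : y ≠ x), A y with hN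
  have hdis : Disjoint (A x) N := hA.submodule_iSupIndep x
  have haN : a ∉ N := fun hmem => ha0 (by simpa using hdis.le_bot ⟨ha, hmem⟩)
  have hq : (N.mkQ a) ≠ 0 := by
    simpa [Submodule.mkQ_apply, Submodule.Quotient.mk_eq_zero] using haN
  obtain ⟨f0, hf0⟩ := (LinearMap.toSpanSingleton K _ (N.mkQ a)).exists_leftInverse_of_injective
    (LinearMap.ker_toSpanSingleton K hq)
  refine ⟨f0 ∘ₗ N.mkQ, ?_, ?_⟩
  · have := LinearMap.congr_fun hf0 1
    simpa [LinearMap.toSpanSingleton_apply] using this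
  · intro y hy m hm
    have hmN : m ∈ N := Submodule.mem_iSup_of_mem y (Submodule.mem_iSup_of_mem hy hm)
    simp [Submodule.mkQ_apply, (Submodule.Quotient.mk_eq_zero N).mpr hmN]

lemma stmt3_smul_cancel {x y : K} {m : V} (hm : m ≠ 0) (hxy : x • m = y • m) : x = y := by
  have h0 : (x - y) • m = 0 := by rw [sub_smul, hxy, sub_self]
  rcases smul_eq_zero.mp h0 with h' | h'
  · exact sub_eq_zero.mp h'
  · exact absurd h' hm

/-- The family of tri-graded nilpotent tuples used to produce infinitely many classes. -/
def stmt3Tup (f h e : V →ₗ[K] K) (u v w : V) (t : K) : Fin 3 → Module.End K V :=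
  ![f.smulRight v + h.smulRight w,
    f.smulRight u + e.smulRight (t • w),
    h.smulRight u + e.smulRight v]

variable (grading : (Fin 3 → ℤ) → Submodule K V)
  (f h e : V →ₗ[K] K) (u v w a b c : V)
  (hu : u ∈ grading ![2,1,1]) (hv : v ∈ grading ![1,2,1]) (hw : w ∈ grading ![1,1,2])
  (ha : a ∈ grading ![2,2,1]) (hb : b ∈ grading ![2,1,2]) (hc : c ∈ grading ![1,2,2])
  (hu0 : u ≠ 0) (hv0 : v ≠ 0) (hw0 : w ≠ 0)
  (hfa : f a = 1) (hhb : h b = 1) (hec : e c = 1)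
  (hf : ∀ y, y ≠ ![2,2,1] → ∀ m ∈ grading y, f m = 0)
  (hh : ∀ y, y ≠ ![2,1,2] → ∀ m ∈ grading y, h m = 0)
  (he : ∀ y, y ≠ ![1,2,2] → ∀ m ∈ grading y, e m = 0)

include hu hv hw hf hh he in
lemma stmt3Tup_mul (t : K) (i j : Fin 3) :
    (stmt3Tup f h e u v w t i) * (stmt3Tup f h e u v w t j) = 0 := by
  have fu : f u = 0 := hf _ (by decide) u hu
  have fv : f v = 0 := hf _ (by decide) v hv
  have fw : f w = 0 := hf _ (by decide) w hw
  have hu' : h u = 0 := hh _ (by decide) u hu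
  have hv' : h v = 0 := hh _ (by decide) v hv
  have hw' : h w = 0 := hh _ (by decide) w hw
  have eu : e u = 0 := he _ (by decide) u hu
  have ev : e v = 0 := he _ (by decide) v hv
  have ew : e w = 0 := he _ (by decide) w hw
  ext m
  fin_cases i <;> fin_cases j <;>
    simp [stmt3Tup, Module.End.mul_apply, map_add, map_smul, fu, fv, fw, hu', hv', hw',
      eu, ev, ew, LinearMap.smulRight_apply, Matrix.cons_val_zero, Matrix.cons_val_one]

include hu hv hw hf hh he in
lemma stmt3Tup_isGraded (t : K) : IsGradedNilTuple grading (stmt3Tup f h e u v w t) := by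
  refine ⟨fun i j => ?_, fun i => ⟨2, ?_⟩, ?_⟩
  · unfold Commute SemiconjBy
    rw [stmt3Tup_mul grading f h e u v w hu hv hw hf hh he t i j,
      stmt3Tup_mul grading f h e u v w hu hv hw hf hh he t j i]
  · rw [pow_two]; exact stmt3Tup_mul grading f h e u v w hu hv hw hf hh he t i i
  · intro i x
    rintro _ ⟨m, hm, rfl⟩
    have e0 : (![2,2,1] : Fin 3 → ℤ) - stdE 3 0 = ![1,2,1] := by
      funext j; fin_cases j <;> simp [stdE]
    have e1 : (![2,1,2] : Fin 3 → ℤ) - stdE 3 0 = ![1,1,2] := by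
      funext j; fin_cases j <;> simp [stdE]
    have e2 : (![2,2,1] : Fin 3 → ℤ) - stdE 3 1 = ![2,1,1] := by
      funext j; fin_cases j <;> simp [stdE]
    have e3 : (![1,2,2] : Fin 3 → ℤ) - stdE 3 1 = ![1,1,2] := by
      funext j; fin_cases j <;> simp [stdE]
    have e4 : (![2,1,2] : Fin 3 → ℤ) - stdE 3 2 = ![2,1,1] := by
      funext j; fin_cases j <;> simp [stdE]
    have e5 : (![1,2,2] : Fin 3 → ℤ) - stdE 3 2 = ![1,2,1] := by
      funext j; fin_cases j <;> simp [stdE]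
    fin_cases i
    · by_cases hx1 : x = ![2,2,1]
      · subst hx1
        show (stmt3Tup f h e u v w t 0) m ∈ grading (![2,2,1] - stdE 3 0)
        rw [e0]
        have : h m = 0 := hh _ (by decide) m hm
        simp [stmt3Tup, this]
        exact Submodule.smul_mem _ _ hv
      · by_cases hx2 : x = ![2,1,2]
        · subst hx2
          show (stmt3Tup f h e u v w t 0) m ∈ grading (![2,1,2] - stdE 3 0)
          rw [e1]
          have : f m = 0 := hf _ (by decide) m hm
          simp [stmt3Tup, this]
          exact Submodule.smul_mem _ _ hw
        · have h1 : f m = 0 := hf _ hx1 m hm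
          have h2 : h m = 0 := hh _ hx2 m hm
          show (stmt3Tup f h e u v w t 0) m ∈ grading (x - stdE 3 0)
          simp [stmt3Tup, h1, h2]
    · by_cases hx1 : x = ![2,2,1]
      · subst hx1
        show (stmt3Tup f h e u v w t 1) m ∈ grading (![2,2,1] - stdE 3 1)
        rw [e2]
        have : e m = 0 := he _ (by decide) m hm
        simp [stmt3Tup, this]
        exact Submodule.smul_mem _ _ hu
      · by_cases hx2 : x = ![1,2,2]
        · subst hx2
          show (stmt3Tup f h e u v w t 1) m ∈ grading (![1,2,2] - stdE 3 1)
          rw [e3]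
          have : f m = 0 := hf _ (by decide) m hm
          simp [stmt3Tup, this, smul_smul]
          exact Submodule.smul_mem _ _ hw
        · have h1 : f m = 0 := hf _ hx1 m hm
          have h2 : e m = 0 := he _ hx2 m hm
          show (stmt3Tup f h e u v w t 1) m ∈ grading (x - stdE 3 1)
          simp [stmt3Tup, h1, h2]
    · by_cases hx1 : x = ![2,1,2]
      · subst hx1
        show (stmt3Tup f h e u v w t 2) m ∈ grading (![2,1,2] - stdE 3 2)
        rw [e4]
        have : e m = 0 := he _ (by decide) m hm
        simp [stmt3Tup, this]
        exact Submodule.smul_mem _ _ hu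
      · by_cases hx2 : x = ![1,2,2]
        · subst hx2
          show (stmt3Tup f h e u v w t 2) m ∈ grading (![1,2,2] - stdE 3 2)
          rw [e5]
          have : h m = 0 := hh _ (by decide) m hm
          simp [stmt3Tup, this]
          exact Submodule.smul_mem _ _ hv
        · have h1 : h m = 0 := hh _ hx1 m hm
          have h2 : e m = 0 := he _ hx2 m hm
          show (stmt3Tup f h e u v w t 2) m ∈ grading (x - stdE 3 2)
          simp [stmt3Tup, h1, h2]

include hu hv hw ha hb hc hu0 hv0 hw0 hfa hhb hec hf hh he in
lemma stmt3Tup_inj (t s : K) (g : V ≃ₗ[K] V)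
    (hg : ∀ x, (grading x).map (g : V →ₗ[K] V) = grading x)
    (hconj : ∀ i, stmt3Tup f h e u v w s i =
      (g : V →ₗ[K] V) ∘ₗ stmt3Tup f h e u v w t i ∘ₗ (g.symm : V →ₗ[K] V)) :
    t = s := by
  have key : ∀ i m, stmt3Tup f h e u v w s i (g m) = g (stmt3Tup f h e u v w t i m) := by
    intro i m
    have := LinearMap.congr_fun (hconj i) (g m)
    simpa using this
  have hga : (g a : V) ∈ grading ![2,2,1] := by
    rw [← hg ![2,2,1]]; exact ⟨a, ha, rfl⟩
  have hgb : (g b : V) ∈ grading ![2,1,2] := by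
    rw [← hg ![2,1,2]]; exact ⟨b, hb, rfl⟩
  have hgc : (g c : V) ∈ grading ![1,2,2] := by
    rw [← hg ![1,2,2]]; exact ⟨c, hc, rfl⟩
  have hha : h a = 0 := hh _ (by decide) a ha
  have hea : e a = 0 := he _ (by decide) a ha
  have hfb : f b = 0 := hf _ (by decide) b hb
  have heb : e b = 0 := he _ (by decide) b hb
  have hfc : f c = 0 := hf _ (by decide) c hc
  have hhc : h c = 0 := hh _ (by decide) c hc
  have hhga : h (g a) = 0 := hh _ (by decide) _ hga
  have hega : e (g a) = 0 := he _ (by decide) _ hga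
  have hfgb : f (g b) = 0 := hf _ (by decide) _ hgb
  have hegb : e (g b) = 0 := he _ (by decide) _ hgb
  have hfgc : f (g c) = 0 := hf _ (by decide) _ hgc
  have hhgc : h (g c) = 0 := hh _ (by decide) _ hgc
  set α := f (g a) with hα
  set β := h (g b) with hβ
  set γ := e (g c) with hγ
  have E1 : g v = α • v := by
    have := key 0 a
    simpa [stmt3Tup, hfa, hha, hhga] using this.symm
  have E2 : g u = α • u := by
    have := key 1 a
    simpa [stmt3Tup, hfa, hea, hega] using this.symm
  have E3 : g w = β • w := by
    have := key 0 b
    simpa [stmt3Tup, hhb, hfb, hfgb] using this.symm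
  have E4 : β • u = α • u := by
    have := key 2 b
    simpa [stmt3Tup, hhb, heb, hegb, E2] using this
  have E5 : γ • v = α • v := by
    have := key 2 c
    simpa [stmt3Tup, hec, hhc, hhgc, E1] using this
  have E6 : (γ * s) • w = (t * β) • w := by
    have := key 1 c
    simpa [stmt3Tup, hec, hfc, hfgc, E3, smul_smul] using this
  have hβα : β = α := stmt3_smul_cancel hu0 E4
  have hγα : γ = α := stmt3_smul_cancel hv0 E5
  have hα0 : α ≠ 0 := by
    intro h0
    apply hv0
    have : g v = 0 := by rw [E1, h0, zero_smul]
    exact g.map_eq_zero_iff.mp this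
  have hfin := stmt3_smul_cancel hw0 E6
  rw [hγα, hβα] at hfin
  have hst : α * s = α * t := by rw [hfin]; ring
  exact (mul_left_cancel₀ hα0 hst).symm

lemma baseChangeRel_equivalence {k : ℕ} (grading : (Fin k → ℤ) → Submodule K V) :
    Equivalence (BaseChangeRel grading) := by
  constructor
  · intro φ
    exact ⟨LinearEquiv.refl K V, fun x => by simp, fun i => by ext m; simp⟩
  · rintro φ ψ ⟨g, hg, hc⟩
    refine ⟨g.symm, fun x => ?_, fun i => ?_⟩
    · conv_lhs => rw [← hg x]
      rw [← Submodule.map_comp]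
      convert Submodule.map_id (grading x)
      ext m; simp
    · rw [hc i]; ext m; simp
  · rintro φ ψ χ ⟨g1, hg1, hc1⟩ ⟨g2, hg2, hc2⟩
    refine ⟨g1.trans g2, fun x => ?_, fun i => ?_⟩
    · have hcoe : ((g1.trans g2 : V ≃ₗ[K] V) : V →ₗ[K] V)
          = (g2 : V →ₗ[K] V) ∘ₗ (g1 : V →ₗ[K] V) := by ext m; simp
      rw [hcoe, Submodule.map_comp, hg1, hg2]
    · rw [hc2 i, hc1 i]; ext m; simp

end Stmt3Aux

/-- if all six components `V_{(2,1,1)}, V_{(1,2,1)}, V_{(1,1,2)},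
V_{(2,2,1)}, V_{(2,1,2)}, V_{(1,2,2)}` are nonzero, there are infinitely many
tri-graded nilpotent tuples up to base change (non-flat case, Boos §5.1). -/
theorem statement3 (K : Type*) [Field K] [IsAlgClosed K] (W : GradedVS K 3)
    (h1 : W.grading ![2, 1, 1] ≠ ⊥) (h2 : W.grading ![1, 2, 1] ≠ ⊥)
    (h3 : W.grading ![1, 1, 2] ≠ ⊥) (h4 : W.grading ![2, 2, 1] ≠ ⊥)
    (h5 : W.grading ![2, 1, 2] ≠ ⊥) (h6 : W.grading ![1, 2, 2] ≠ ⊥) :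
    Infinite (Quot (BaseChangeRel W.grading)) := by
  classical
  obtain ⟨u, hu, hu0⟩ := (Submodule.ne_bot_iff _).mp h1
  obtain ⟨v, hv, hv0⟩ := (Submodule.ne_bot_iff _).mp h2
  obtain ⟨w, hw, hw0⟩ := (Submodule.ne_bot_iff _).mp h3
  obtain ⟨a, ha, ha0⟩ := (Submodule.ne_bot_iff _).mp h4
  obtain ⟨b, hb, hb0⟩ := (Submodule.ne_bot_iff _).mp h5
  obtain ⟨c, hc, hc0⟩ := (Submodule.ne_bot_iff _).mp h6
  obtain ⟨f, hfa, hf⟩ := exists_graded_dual W.grading W.internal ![2,2,1] a ha ha0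
  obtain ⟨h, hhb, hh⟩ := exists_graded_dual W.grading W.internal ![2,1,2] b hb hb0
  obtain ⟨e, hec, he⟩ := exists_graded_dual W.grading W.internal ![1,2,2] c hc hc0
  set F : K → GradedNilTuple W.grading := fun t =>
    ⟨stmt3Tup f h e u v w t, stmt3Tup_isGraded W.grading f h e u v w hu hv hw hf hh he t⟩
    with hF
  have hinj : Function.Injective (fun t : K => Quot.mk (BaseChangeRel W.grading) (F t)) := by
    intro t s hts
    have hE := Quot.eqvGen_exact hts
    have hrel := ((baseChangeRel_equivalence W.grading).eqvGen_iff).mp hE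
    obtain ⟨g, hg, hconj⟩ := hrel
    exact stmt3Tup_inj W.grading f h e u v w a b c hu hv hw ha hb hc hu0 hv0 hw0
      hfa hhb hec hf hh he t s g hg hconj
  exact Infinite.of_injective _ hinj
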